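/- Let τ be the real 3×3 matrix with rows (0,1,0), (1,0,1), (0,1,0), let g_t := exp(tτ), let σ(x) := x₁+x₂+x₃ for x ∈ ℝ³, and let D := {(v,w) ∈ ℝ³×ℝ³ : σ(v) = 1, σ(w) = 1, v₁w₁ − v₂w₂ + v₃w₃ = 0, and all vᵢ, wᵢ ≥ 0}. Set λ := (1/(2+√2), √2/(2+√2), 1/(2+√2)) ∈ ℝ³. Then (λ, λ) ∈ D, and (λ, λ) is the unique point (v,w) ∈ D satisfying g_t v = σ(g_t v)·v and g_t w = σ(g_t w)·w for all t > 0 (i.e., the unique fixed point in D of the flow (v,w) ↦ (g_t v/σ(g_t v), g_t w/σ(g_t w)) for all t > 0). -/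

import Mathlib

open Matrix

/-- `τ = e₁ + e₂ + f₁ + f₂` is the sum of the Chevalley generators of `sl₃(ℝ)`. -/
def tauMat : Matrix (Fin 3) (Fin 3) ℝ := !![0, 1, 0; 1, 0, 1; 0, 1, 0]

/-- The coordinate sum `σ(x) = x₁ + x₂ + x₃` of a vector `x ∈ ℝ³`. -/
def coordSum (x : Fin 3 → ℝ) : ℝ := x 0 + x 1 + x 2

/-- The realization of the totally nonnegative part of the complete flag variety of
`SL₃(ℝ)`: pairs `(v, w) ∈ ℝ³ × ℝ³` with `σ(v) = 1`, `σ(w) = 1`,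
`v₁w₁ - v₂w₂ + v₃w₃ = 0`, and all coordinates nonnegative. -/
def tnnFlagD : Set ((Fin 3 → ℝ) × (Fin 3 → ℝ)) :=
  {p | coordSum p.1 = 1 ∧ coordSum p.2 = 1 ∧
    p.1 0 * p.2 0 - p.1 1 * p.2 1 + p.1 2 * p.2 2 = 0 ∧
    (∀ i, 0 ≤ p.1 i) ∧ (∀ i, 0 ≤ p.2 i)}

/-- The normalized top eigenvector `λ = (1, √2, 1) / (2 + √2)` of `τ`. -/
noncomputable def lamVec : Fin 3 → ℝ :=
  ![1 / (2 + Real.sqrt 2), Real.sqrt 2 / (2 + Real.sqrt 2), 1 / (2 + Real.sqrt 2)]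


noncomputable def Pmat : Matrix (Fin 3) (Fin 3) ℝ :=
  !![1, 1, 1; Real.sqrt 2, 0, -Real.sqrt 2; 1, -1, 1]

noncomputable def Qmat : Matrix (Fin 3) (Fin 3) ℝ :=
  !![1/4, Real.sqrt 2/4, 1/4; 1/2, 0, -(1/2); 1/4, -(Real.sqrt 2/4), 1/4]

lemma sqrt2_sq : Real.sqrt 2 * Real.sqrt 2 = 2 := Real.mul_self_sqrt (by norm_num)

lemma hPQ : Pmat * Qmat = 1 := by
  ext i j
  fin_cases i <;> fin_cases j <;>
    simp [Pmat, Qmat, Matrix.mul_apply, Fin.sum_univ_three, sqrt2_sq] <;> ring_nf <;>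
    nlinarith [sqrt2_sq]

lemma hQP : Qmat * Pmat = 1 := by
  ext i j
  fin_cases i <;> fin_cases j <;>
    simp [Pmat, Qmat, Matrix.mul_apply, Fin.sum_univ_three, sqrt2_sq] <;> ring_nf <;>
    nlinarith [sqrt2_sq]

lemma exp_formula (t : ℝ) :
    NormedSpace.exp (t • tauMat) =
      Pmat * Matrix.diagonal ![Real.exp (Real.sqrt 2 * t), 1,
        Real.exp (-(Real.sqrt 2 * t))] * Qmat := by
  have hinv : Pmat⁻¹ = Qmat := Matrix.inv_eq_right_inv hPQ
  have hU : IsUnit Pmat := ⟨⟨Pmat, Qmat, hPQ, hQP⟩, rfl⟩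
  have key : t • tauMat =
      Pmat * Matrix.diagonal ![Real.sqrt 2 * t, 0, -(Real.sqrt 2 * t)] * Qmat := by
    ext i j
    fin_cases i <;> fin_cases j <;>
      simp [Pmat, Qmat, tauMat, Matrix.mul_apply, Matrix.diagonal_apply, Matrix.vecMul,
        dotProduct, Fin.sum_univ_three] <;>
      linear_combination (-(t / 2)) * sqrt2_sq
  have hexp : NormedSpace.exp ![Real.sqrt 2 * t, 0, -(Real.sqrt 2 * t)] =
      ![Real.exp (Real.sqrt 2 * t), 1, Real.exp (-(Real.sqrt 2 * t))] := by
    rw [Pi.exp_def]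
    funext i
    fin_cases i <;> simp [← Real.exp_eq_exp_ℝ]
  rw [key, ← hinv, Matrix.exp_conj Pmat _ hU, Matrix.exp_diagonal, hexp, hinv]

lemma mulVec_formula (s s' : ℝ) (v : Fin 3 → ℝ) :
    (Pmat * Matrix.diagonal ![s, 1, s'] * Qmat).mulVec v =
      ![((s + s' + 2)/4) * v 0 + (Real.sqrt 2 * (s - s')/4) * v 1 + ((s + s' - 2)/4) * v 2,
        (Real.sqrt 2 * (s - s')/4) * v 0 + ((s + s')/2) * v 1 + (Real.sqrt 2 * (s - s')/4) * v 2,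
        ((s + s' - 2)/4) * v 0 + (Real.sqrt 2 * (s - s')/4) * v 1 + ((s + s' + 2)/4) * v 2] := by
  funext i
  fin_cases i
  · simp [Pmat, Qmat, Matrix.mulVec, Matrix.mul_apply, Matrix.diagonal_apply, Matrix.vecMul,
      dotProduct, Fin.sum_univ_three]
    ring
  · simp [Pmat, Qmat, Matrix.mulVec, Matrix.mul_apply, Matrix.diagonal_apply, Matrix.vecMul,
      dotProduct, Fin.sum_univ_three]
    linear_combination ((s + s')/4 * v 1) * sqrt2_sq
  · simp [Pmat, Qmat, Matrix.mulVec, Matrix.mul_apply, Matrix.diagonal_apply, Matrix.vecMul,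
      dotProduct, Fin.sum_univ_three]
    ring

lemma core (a b c : ℝ) (ha : 0 < a) (hb : 0 < b) (v : Fin 3 → ℝ)
    (hσ : v 0 + v 1 + v 2 = 1) (h0 : 0 ≤ v 0) (h1 : 0 ≤ v 1) (h2 : 0 ≤ v 2)
    (e0 : (1 + b) * v 0 + a * v 1 + b * v 2 = c * v 0)
    (e1 : a * v 0 + (1 + 2*b) * v 1 + a * v 2 = c * v 1)
    (e2 : b * v 0 + a * v 1 + (1 + b) * v 2 = c * v 2) :
    v = lamVec := by
  have h2pos : (0:ℝ) < 2 + Real.sqrt 2 := by positivity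
  have hc1 : c = 1 + a + 2*b + a * v 1 := by
    linear_combination - e0 - e1 - e2 + (1 + a + 2*b - c) * hσ
  have hcg : 1 < c := by nlinarith
  have h02 : v 0 = v 2 := by
    have k1 : (c - 1) * (v 0 - v 2) = 0 := by linear_combination e2 - e0
    rcases mul_eq_zero.mp k1 with h | h
    · linarith
    · linarith
  have k2' : a * (2 * v 0) = a * (v 1 + v 1 * v 1) := by
    linear_combination e1 + v 1 * hc1 + a * h02
  have k2 : 2 * v 0 = v 1 + v 1 * v 1 := mul_left_cancel₀ ha.ne' k2'
  have hq : (v 1 + 1) ^ 2 = 2 := by nlinarith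
  have hs : Real.sqrt 2 = v 1 + 1 := by
    rw [show (2:ℝ) = (v 1 + 1)^2 from hq.symm]
    exact Real.sqrt_sq (by linarith)
  funext i
  fin_cases i <;> simp [lamVec] <;> rw [hs] <;> field_simp <;> nlinarith [hq]

lemma core' (s s' : ℝ)
    (ha : 0 < Real.sqrt 2 * (s - s')/4) (hb : 0 < (s + s' - 2)/4)
    (v : Fin 3 → ℝ) (hσ : v 0 + v 1 + v 2 = 1) (hnn : ∀ i, 0 ≤ v i)
    (hf : (Pmat * Matrix.diagonal ![s, 1, s'] * Qmat).mulVec v =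
      coordSum ((Pmat * Matrix.diagonal ![s, 1, s'] * Qmat).mulVec v) • v) :
    v = lamVec := by
  rw [mulVec_formula] at hf
  have e0 := congrFun hf 0
  have e1 := congrFun hf 1
  have e2 := congrFun hf 2
  simp only [coordSum, Matrix.cons_val_zero, Matrix.cons_val_one, Matrix.head_cons,
    Matrix.cons_val_two, Matrix.tail_cons, Pi.smul_apply, smul_eq_mul] at e0 e1 e2
  exact core (Real.sqrt 2 * (s - s')/4) ((s + s' - 2)/4)
    ((((s + s' + 2)/4) * v 0 + (Real.sqrt 2 * (s - s')/4) * v 1 + ((s + s' - 2)/4) * v 2)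
     + ((Real.sqrt 2 * (s - s')/4) * v 0 + ((s + s')/2) * v 1 + (Real.sqrt 2 * (s - s')/4) * v 2)
     + (((s + s' - 2)/4) * v 0 + (Real.sqrt 2 * (s - s')/4) * v 1 + ((s + s' + 2)/4) * v 2))
    ha hb v hσ (hnn 0) (hnn 1) (hnn 2)
    (by linear_combination e0) (by linear_combination e1) (by linear_combination e2)

/-- `(λ, λ)` lies in `D`, and it is the unique point `(v, w)` of `D` satisfying
`g_t v = σ(g_t v) • v` and `g_t w = σ(g_t w) • w` for all `t > 0`, i.e. the unique fixed
point of the flow `(v, w) ↦ (g_t v / σ(g_t v), g_t w / σ(g_t w))` on `D` for all `t > 0`,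
where `g_t = exp(t τ)`. -/
theorem lamVec_unique_fixed_point :
    ((lamVec, lamVec) ∈ tnnFlagD ∧
      ∀ t : ℝ, 0 < t →
        (NormedSpace.exp (t • tauMat)).mulVec lamVec =
          coordSum ((NormedSpace.exp (t • tauMat)).mulVec lamVec) • lamVec) ∧
    ∀ v w : Fin 3 → ℝ, (v, w) ∈ tnnFlagD →
      (∀ t : ℝ, 0 < t →
        (NormedSpace.exp (t • tauMat)).mulVec v =
          coordSum ((NormedSpace.exp (t • tauMat)).mulVec v) • v ∧
        (NormedSpace.exp (t • tauMat)).mulVec w =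
          coordSum ((NormedSpace.exp (t • tauMat)).mulVec w) • w) →
      v = lamVec ∧ w = lamVec := by
  have h2pos : (0:ℝ) < 2 + Real.sqrt 2 := by positivity
  have hsnn : (0:ℝ) ≤ Real.sqrt 2 := Real.sqrt_nonneg 2
  constructor
  · constructor
    · refine ⟨?_, ?_, ?_, ?_, ?_⟩
      · simp [coordSum, lamVec]; field_simp; ring
      · simp [coordSum, lamVec]; field_simp; ring
      · simp [lamVec]; field_simp; linear_combination -sqrt2_sq
      · intro i; fin_cases i <;> simp [lamVec] <;> positivity
      · intro i; fin_cases i <;> simp [lamVec] <;> positivity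
    · intro t ht
      rw [exp_formula, mulVec_formula]
      have key : (![((Real.exp (Real.sqrt 2 * t) + Real.exp (-(Real.sqrt 2 * t)) + 2)/4) * lamVec 0
            + (Real.sqrt 2 * (Real.exp (Real.sqrt 2 * t) - Real.exp (-(Real.sqrt 2 * t)))/4) * lamVec 1
            + ((Real.exp (Real.sqrt 2 * t) + Real.exp (-(Real.sqrt 2 * t)) - 2)/4) * lamVec 2,
          (Real.sqrt 2 * (Real.exp (Real.sqrt 2 * t) - Real.exp (-(Real.sqrt 2 * t)))/4) * lamVec 0
            + ((Real.exp (Real.sqrt 2 * t) + Real.exp (-(Real.sqrt 2 * t)))/2) * lamVec 1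
            + (Real.sqrt 2 * (Real.exp (Real.sqrt 2 * t) - Real.exp (-(Real.sqrt 2 * t)))/4) * lamVec 2,
          ((Real.exp (Real.sqrt 2 * t) + Real.exp (-(Real.sqrt 2 * t)) - 2)/4) * lamVec 0
            + (Real.sqrt 2 * (Real.exp (Real.sqrt 2 * t) - Real.exp (-(Real.sqrt 2 * t)))/4) * lamVec 1
            + ((Real.exp (Real.sqrt 2 * t) + Real.exp (-(Real.sqrt 2 * t)) + 2)/4) * lamVec 2]
          : Fin 3 → ℝ) = Real.exp (Real.sqrt 2 * t) • lamVec := by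
        funext i
        fin_cases i
        · simp [lamVec, smul_eq_mul]
          field_simp
          linear_combination (1 *
                (Real.exp (Real.sqrt 2 * t) - Real.exp (-(Real.sqrt 2 * t)))) * sqrt2_sq
        · simp [lamVec, smul_eq_mul]
          field_simp
          ring
        · simp [lamVec, smul_eq_mul]
          field_simp
          linear_combination (1 *
                (Real.exp (Real.sqrt 2 * t) - Real.exp (-(Real.sqrt 2 * t)))) * sqrt2_sq
      rw [key]
      have : coordSum (Real.exp (Real.sqrt 2 * t) • lamVec) = Real.exp (Real.sqrt 2 * t) := by
        simp [coordSum, lamVec, smul_eq_mul]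
        field_simp
        ring
      rw [this]
  · intro v w hD hfix
    obtain ⟨hσv, hσw, _, hv, hw⟩ := hD
    simp only [coordSum] at hσv hσw
    obtain ⟨hfv, hfw⟩ := hfix 1 one_pos
    set s := Real.exp (Real.sqrt 2 * 1) with hs_def
    set s' := Real.exp (-(Real.sqrt 2 * 1)) with hs'_def
    have hss' : s * s' = 1 := by
      rw [hs_def, hs'_def, ← Real.exp_add]; simp
    have hs1 : 1 < s := by
      rw [hs_def]
      apply Real.one_lt_exp_iff.mpr
      positivity
    have hs'pos : 0 < s' := Real.exp_pos _
    have hs'1 : s' < 1 := by nlinarith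
    have hdpos : 0 < s - s' := by nlinarith
    have ha : 0 < Real.sqrt 2 * (s - s')/4 :=
      div_pos (mul_pos (Real.sqrt_pos.mpr (by norm_num)) hdpos) (by norm_num)
    have hb : 0 < (s + s' - 2)/4 := by nlinarith
    rw [exp_formula] at hfv hfw
    constructor
    · exact core' s s' ha hb v hσv hv hfv
    · exact core' s s' ha hb w hσw hw hfw
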